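/- arXiv:0808.0345 — 4 statements merged into one kernel-verified Lean document; each statement's English description precedes it below -/
import Mathlib

section
/- Let R be a commutative ring with elements q, r ∈ R, and let A be an associative R-algebra. Suppose U, D ∈ A satisfy D·U = q·U·D + r·1. Then for every polynomial f = ∑_{i=0}^{N} a_i X^i ∈ R[X], one has D·f(U) = r·f^{(q)}(U) + g(U)·D, where f^{(q)} = ∑_{i=1}^{N} [i]_q a_i X^{i-1} is the q-derivative of f, and g = ∑_{i=0}^{N} a_i q^i X^i is the polynomial f with X replaced by qX. -/
open Polynomial

/-- The `q`-integer `[n]_q = 1 + q + ⋯ + q^{n-1}`. -/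
def qInt {R : Type*} [CommRing R] (q : R) (n : ℕ) : R :=
  ∑ j ∈ Finset.range n, q ^ j

/-- The `q`-derivative of a polynomial: `(∑ aᵢ Xⁱ)^{(q)} = ∑_{i≥1} [i]_q aᵢ X^{i-1}`. -/
noncomputable def qDeriv {R : Type*} [CommRing R] (q : R) (f : R[X]) : R[X] :=
  f.sum fun i a => C (qInt q i * a) * X ^ (i - 1)

lemma qDeriv_add {R : Type*} [CommRing R] (q : R) (f g : R[X]) :
    qDeriv q (f + g) = qDeriv q f + qDeriv q g := by
  unfold qDeriv
  apply Polynomial.sum_add_index <;> intros <;>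
    simp [mul_add, add_mul]

lemma qDeriv_monomial {R : Type*} [CommRing R] (q : R) (n : ℕ) (a : R) :
    qDeriv q (monomial n a) = C (qInt q n * a) * X ^ (n - 1) := by
  unfold qDeriv
  rw [Polynomial.sum_monomial_index]
  simp

lemma key_pow {R : Type*} [CommRing R] {A : Type*} [Ring A] [Algebra R A]
    (q r : R) (U D : A) (h : D * U = q • (U * D) + r • (1 : A)) (n : ℕ) :
    D * U ^ n = (r * qInt q n) • U ^ (n - 1) + q ^ n • (U ^ n * D) := by
  induction n with
  | zero => simp [qInt]
  | succ n ih =>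
    have h1 : ((r * qInt q n) • U ^ (n - 1)) * U = (r * qInt q n) • U ^ n := by
      cases n with
      | zero => simp [qInt]
      | succ m =>
        rw [smul_mul_assoc, ← pow_succ]
        simp
    calc D * U ^ (n + 1) = (D * U ^ n) * U := by rw [pow_succ, mul_assoc]
      _ = ((r * qInt q n) • U ^ (n - 1) + q ^ n • (U ^ n * D)) * U := by rw [ih]
      _ = (r * qInt q n) • U ^ n + q ^ n • (U ^ n * (q • (U * D) + r • (1 : A))) := by
          rw [add_mul, h1, smul_mul_assoc, mul_assoc, h]
      _ = _ := by
          rw [mul_add, smul_add]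
          have e1 : q ^ n • (U ^ n * q • (U * D)) = q ^ (n + 1) • (U ^ (n + 1) * D) := by
            rw [mul_smul_comm, smul_smul, pow_succ, pow_succ]
            ring_nf
            rw [mul_assoc]
          have e2 : q ^ n • (U ^ n * r • (1 : A)) = (r * q ^ n) • U ^ n := by
            rw [mul_smul_comm, smul_smul, mul_one, mul_comm]
          rw [e1, e2, ← add_assoc, add_right_comm, ← add_smul]
          have : r * qInt q n + r * q ^ n = r * qInt q (n + 1) := by
            simp [qInt, Finset.sum_range_succ, mul_add]
          rw [this]
          simp

/-- Let `R` be a commutative ring, `q, r ∈ R`, and `A` an associative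
`R`-algebra.  If `U, D ∈ A` satisfy `D·U = q·U·D + r·1`, then for every polynomial
`f ∈ R[X]` one has `D·f(U) = r·f^{(q)}(U) + g(U)·D` where `f^{(q)}` is the
`q`-derivative of `f` and `g(X) = f(qX)`. -/
theorem stmt_1 {R : Type*} [CommRing R] {A : Type*} [Ring A] [Algebra R A]
    (q r : R) (U D : A) (h : D * U = q • (U * D) + r • (1 : A))
    (f : R[X]) :
    D * aeval U f = r • aeval U (qDeriv q f) + aeval U (f.comp (C q * X)) * D := by
  induction f using Polynomial.induction_on' with
  | add p p' hp hp' =>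
    rw [map_add, mul_add, hp, hp', qDeriv_add, map_add, add_comp, map_add, smul_add, add_mul]
    abel
  | monomial n a =>
    rw [qDeriv_monomial]
    have hcomp : (monomial n a).comp (C q * X) = C (q ^ n * a) * X ^ n := by
      rw [monomial_comp]
      rw [mul_pow, ← C_pow, ← mul_assoc, ← C_mul, mul_comm a]
    rw [hcomp]
    have e0 : aeval U (monomial n a) = a • U ^ n := by
      simp [aeval_monomial, Algebra.smul_def]
    have e1 : aeval U (C (qInt q n * a) * X ^ (n - 1)) = (qInt q n * a) • U ^ (n - 1) := by
      simp [Algebra.smul_def]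
    have e2 : aeval U (C (q ^ n * a) * X ^ n) = (q ^ n * a) • U ^ n := by
      simp [Algebra.smul_def]
    rw [e0, e1, e2, mul_smul_comm a D, key_pow q r U D h n, smul_add, smul_smul, smul_smul,
      smul_smul, smul_mul_assoc]
    congr 1 <;> ring_nf
end

section
/- Represent a permutation of {1,…,n} as a list of length n containing each of 1,…,n exactly once, and let S_n denote the set of such lists. For u ∈ S_k and w ∈ S_{k+1}, define a(u, w) = q^{k+1-s} if deleting the letter k+1 from w (where s is the 1-based position of k+1 in w) yields u, and a(u, w) = 0 otherwise; define b(u, w) = 1 if u is obtained from w by deleting the first letter of w and decreasing every letter larger than the deleted letter by one, and b(u, w) = 0 otherwise. Then for every w ∈ S_n: (i) ∑ over all sequences ∅ = w_0, w_1, …, w_n = w with w_k ∈ S_k of ∏_{k=1}^{n} a(w_{k-1}, w_k) equals q^{inv(w)}, where inv(w) = #{(i,j) : i < j and w_i > w_j}; and (ii) ∑ over all sequences ∅ = w_0, w_1, …, w_n = w with w_k ∈ S_k of ∏_{k=1}^{n} b(w_{k-1}, w_k) equals 1. -/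
open Polynomial
open scoped Classical

/-- The set of permutations of `{1, …, n}`, represented as the `Finset` of lists that are
rearrangements of `[1, 2, …, n]`, i.e. contain each of `1, …, n` exactly once. -/
def permsOf (n : ℕ) : Finset (List ℕ) :=
  (List.range' 1 n).permutations.toFinset

/-- The up-weight in `Perm`: for `u ∈ S_k` and `w ∈ S_{k+1}`, `a(u,w) = q^{k+1-s}` if
deleting the letter `k+1` from `w` yields `u`, where `s` is the 1-based position of the
letter `k+1` in `w`; otherwise `a(u,w) = 0`.  (Here `q = X ∈ ℤ[q]`.) -/
noncomputable def permUp (k : ℕ) (u w : List ℕ) : Polynomial ℤ :=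
  if w.erase (k + 1) = u then X ^ (k + 1 - (w.idxOf (k + 1) + 1)) else 0

/-- The down-weight in `Perm'`: `b(u,w) = 1` if `u` is obtained from `w` by deleting the
first letter of `w` and decreasing every letter of `w` larger than the deleted letter by
one; otherwise `b(u,w) = 0`. -/
noncomputable def permDown (u w : List ℕ) : Polynomial ℤ :=
  if u = w.tail.map (fun x => if w.headI < x then x - 1 else x) then 1 else 0

/-- The number of inversions of a word `w`: the number of pairs of positions `i < j`
with `w_i > w_j`. -/
def invCount (w : List ℕ) : ℕ :=
  (Finset.univ.filter fun p : Fin w.length × Fin w.length =>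
    p.1 < p.2 ∧ w.get p.2 < w.get p.1).card

namespace Stmt7Aux

lemma mem_permsOf {n : ℕ} {w : List ℕ} : w ∈ permsOf n ↔ w.Perm (List.range' 1 n) := by
  simp [permsOf, List.mem_permutations]

lemma permsOf_zero {w : List ℕ} (h : w ∈ permsOf 0) : w = [] := by
  have := mem_permsOf.1 h
  simpa [List.perm_nil] using this

lemma nodup_of_mem {n : ℕ} {w : List ℕ} (h : w ∈ permsOf n) : w.Nodup :=
  (mem_permsOf.1 h).nodup_iff.2 (List.nodup_range' (s := 1) (n := n))

lemma length_of_mem {n : ℕ} {w : List ℕ} (h : w ∈ permsOf n) : w.length = n := by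
  simpa using (mem_permsOf.1 h).length_eq

lemma bounds_of_mem {n : ℕ} {w : List ℕ} (h : w ∈ permsOf n) {x : ℕ} (hx : x ∈ w) :
    1 ≤ x ∧ x ≤ n := by
  have := (mem_permsOf.1 h).mem_iff.1 hx
  rw [List.mem_range'_1] at this
  omega

lemma max_mem_of_mem {n : ℕ} {w : List ℕ} (h : w ∈ permsOf (n + 1)) : (n + 1) ∈ w := by
  rw [(mem_permsOf.1 h).mem_iff, List.mem_range'_1]
  omega

/-- Truncation: keep only letters `≤ k`. -/
def trunc (k : ℕ) (w : List ℕ) : List ℕ := w.filter (fun x => x ≤ k)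

lemma trunc_range' (k n : ℕ) : trunc k (List.range' 1 n) = List.range' 1 (min k n) := by
  induction n with
  | zero => simp [trunc]
  | succ n ih =>
    have h1 : List.range' 1 (n + 1) = List.range' 1 n ++ [1 + n] := by simpa using List.range'_concat (s := 1) (n := n) (step := 1)
    rw [trunc, h1, List.filter_append]
    rw [trunc] at ih
    rw [ih]
    by_cases hk : n + 1 ≤ k
    · have : min k (n + 1) = n + 1 := by omega
      rw [this]
      have : min k n = n := by omega
      rw [this]
      have h2 : List.range' 1 (n + 1) = List.range' 1 n ++ [1 + n] := by simpa using List.range'_concat (s := 1) (n := n) (step := 1)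
      rw [h2]
      simp [show 1 + n ≤ k by omega]
    · have h3 : min k (n + 1) = min k n := by omega
      rw [h3]
      simp [show ¬ (1 + n ≤ k) by omega]

lemma trunc_mem {n k : ℕ} {w : List ℕ} (h : w ∈ permsOf n) (hk : k ≤ n) :
    trunc k w ∈ permsOf k := by
  rw [mem_permsOf]
  have hp := (mem_permsOf.1 h).filter (fun x => decide (x ≤ k))
  have h2 : min k n = k := by omega
  have h3 : trunc k (List.range' 1 n) = List.range' 1 k := by rw [trunc_range', h2]
  exact h3 ▸ hp


lemma trunc_trunc {j k : ℕ} (h : j ≤ k) (w : List ℕ) : trunc j (trunc k w) = trunc j w := by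
  unfold trunc
  rw [List.filter_filter]
  apply List.filter_congr
  intro x _
  by_cases hx : x ≤ j
  · simp [hx, show x ≤ k by omega]
  · simp [hx]

lemma trunc_self {n : ℕ} {w : List ℕ} (h : w ∈ permsOf n) : trunc n w = w := by
  apply List.filter_eq_self.2
  intro a ha
  simpa using (bounds_of_mem h ha).2

lemma trunc_zero {n : ℕ} {w : List ℕ} (h : w ∈ permsOf n) : trunc 0 w = [] := by
  apply List.filter_eq_nil_iff.2
  intro a ha
  have := (bounds_of_mem h ha).1
  simp; omega

lemma split_of_mem {n : ℕ} {w : List ℕ} (h : w ∈ permsOf (n + 1)) :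
    ∃ a b, w = a ++ (n + 1) :: b ∧ (n + 1) ∉ a ∧ (n + 1) ∉ b := by
  obtain ⟨a, b, rfl⟩ := List.append_of_mem (max_mem_of_mem h)
  have hnd := nodup_of_mem h
  rw [List.nodup_append] at hnd
  refine ⟨a, b, rfl, fun ha => ?_, fun hb => ?_⟩
  · exact hnd.2.2 _ ha _ List.mem_cons_self rfl
  · exact (List.nodup_cons.1 hnd.2.1).1 hb

lemma erase_eq_trunc {n : ℕ} {w : List ℕ} (h : w ∈ permsOf (n + 1)) :
    w.erase (n + 1) = trunc n w := by
  obtain ⟨a, b, rfl, ha, hb⟩ := split_of_mem h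
  have hle : ∀ x ∈ a ++ (n + 1) :: b, x ≤ n + 1 := fun x hx => (bounds_of_mem h hx).2
  rw [List.erase_append_right _ ha, List.erase_cons_head]
  unfold trunc
  rw [List.filter_append, List.filter_cons]
  have h1 : List.filter (fun x => decide (x ≤ n)) a = a := by
    apply List.filter_eq_self.2
    intro x hx
    have := hle x (by simp [hx])
    have : x ≤ n := by rcases Nat.lt_or_ge x (n+1) with h'|h'; omega; exact absurd (by omega : x = n+1) (fun e => ha (e ▸ hx))
    simpa
  have h2 : List.filter (fun x => decide (x ≤ n)) b = b := by
    apply List.filter_eq_self.2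
    intro x hx
    have := hle x (by simp [hx])
    have : x ≤ n := by rcases Nat.lt_or_ge x (n+1) with h'|h'; omega; exact absurd (by omega : x = n+1) (fun e => hb (e ▸ hx))
    simpa
  rw [h1, h2]
  simp


lemma countP_as_sum (x : ℕ) (l : List ℕ) :
    l.countP (fun y => y < x) = ∑ j : Fin l.length, if l.get j < x then 1 else 0 := by
  induction l with
  | nil => simp
  | cons a l ih =>
    rw [List.countP_cons, ih]
    show _ = ∑ j : Fin (l.length + 1), if (a :: l).get j < x then 1 else 0
    rw [Fin.sum_univ_succ]
    simp [add_comm]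
    by_cases hax : a < x <;> simp [hax]

lemma invCount_nil : invCount [] = 0 := by
  simp [invCount]

lemma invCount_cons (x : ℕ) (l : List ℕ) :
    invCount (x :: l) = l.countP (fun y => y < x) + invCount l := by
  rw [countP_as_sum]
  unfold invCount
  rw [Finset.card_filter, Finset.card_filter, Fintype.sum_prod_type, Fintype.sum_prod_type]
  show (∑ i : Fin (l.length + 1), ∑ j : Fin (l.length + 1),
      if i < j ∧ (x :: l).get j < (x :: l).get i then 1 else 0) = _
  rw [Fin.sum_univ_succ]
  congr 1
  · rw [Fin.sum_univ_succ]
    simp [Fin.succ_pos]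
  · rw [show (∑ i : Fin l.length, ∑ j : Fin l.length,
        if (i, j).1 < (i, j).2 ∧ l.get (i, j).2 < l.get (i, j).1 then 1 else 0)
      = ∑ i : Fin l.length, ∑ j : Fin l.length,
        if i < j ∧ l.get j < l.get i then 1 else 0 from rfl]
    apply Finset.sum_congr rfl
    intro i _
    rw [Fin.sum_univ_succ]
    simp [Fin.succ_lt_succ_iff]


lemma invCount_append_cons (m : ℕ) : ∀ (a b : List ℕ), (∀ x ∈ a, x < m) → (∀ x ∈ b, x < m) →
    invCount (a ++ m :: b) = invCount (a ++ b) + b.length := by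
  intro a
  induction a with
  | nil =>
    intro b _ hb
    simp only [List.nil_append]
    rw [invCount_cons]
    rw [List.countP_eq_length.2 (fun x hx => by simpa using hb x hx)]
    omega
  | cons y a ih =>
    intro b ha hb
    have hy : y < m := ha y (by simp)
    simp only [List.cons_append]
    rw [invCount_cons, invCount_cons]
    rw [ih b (fun x hx => ha x (by simp [hx])) hb]
    rw [List.countP_append, List.countP_append, List.countP_cons]
    simp [show ¬ (m < y) by omega]
    omega

lemma invCount_max {n : ℕ} {w : List ℕ} (h : w ∈ permsOf (n + 1)) :
    invCount w = invCount (trunc n w) + (n - w.idxOf (n + 1)) := by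
  obtain ⟨a, b, hw, ha, hb⟩ := split_of_mem h
  have hlt : ∀ x ∈ a ++ b, x < n + 1 := by
    intro x hx
    have hxw : x ∈ w := by rw [hw]; rcases List.mem_append.1 hx with h'|h' <;> simp [h']
    have := (bounds_of_mem h hxw).2
    rcases List.mem_append.1 hx with h'|h'
    · exact lt_of_le_of_ne this (fun e => ha (e ▸ h'))
    · exact lt_of_le_of_ne this (fun e => hb (e ▸ h'))
  have htr : trunc n w = a ++ b := by
    rw [← erase_eq_trunc h, hw, List.erase_append_right _ ha, List.erase_cons_head]
  have hidx : w.idxOf (n + 1) = a.length := by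
    rw [hw, List.idxOf_append_of_notMem ha, List.idxOf_cons_self]
    omega
  have hlen : w.length = n + 1 := length_of_mem h
  have hab : a.length + (b.length + 1) = n + 1 := by
    rw [hw] at hlen; simpa using hlen
  rw [htr, hidx, hw]
  rw [invCount_append_cons (n+1) a b (fun x hx => hlt x (by simp [hx])) (fun x hx => hlt x (by simp [hx]))]
  omega

lemma sum_exp : ∀ (n : ℕ), ∀ w ∈ permsOf n,
    (∑ k : Fin n, (k.1 + 1 - ((trunc (k.1 + 1) w).idxOf (k.1 + 1) + 1))) = invCount w := by
  intro n
  induction n with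
  | zero =>
    intro w hw
    rw [permsOf_zero hw]
    simp [invCount_nil]
  | succ n ih =>
    intro w hw
    have hv : trunc n w ∈ permsOf n := trunc_mem hw (Nat.le_succ n)
    rw [Fin.sum_univ_castSucc]
    have h1 : ∀ k : Fin n, trunc (k.1 + 1) w = trunc (k.1 + 1) (trunc n w) := by
      intro k
      rw [trunc_trunc (by omega : k.1 + 1 ≤ n)]
    have h2 : (∑ k : Fin n, (k.1 + 1 - ((trunc (k.1 + 1) w).idxOf (k.1 + 1) + 1)))
        = invCount (trunc n w) := by
      rw [← ih (trunc n w) hv]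
      apply Finset.sum_congr rfl
      intro k _
      rw [h1 k]
    simp only [Fin.coe_castSucc, Fin.val_last]
    rw [h2, invCount_max hw]
    have h3 : trunc (n + 1) w = w := trunc_self hw
    rw [h3]
    have hidx : w.idxOf (n + 1) < n + 1 := by
      have := List.idxOf_lt_length_iff.2 (max_mem_of_mem hw)
      rwa [length_of_mem hw] at this
    omega


def gmap (w : List ℕ) : List ℕ := w.tail.map (fun x => if w.headI < x then x - 1 else x)

lemma map_pred_range' (s b : ℕ) :
    (List.range' (s + 1) b).map (fun x => x - 1) = List.range' s b := by
  rw [List.range'_eq_map_range (s := s) (n := b), List.range'_eq_map_range (s := s+1) (n := b), List.map_map]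
  apply List.map_congr_left
  intro x _
  simp only [Function.comp_apply]
  omega

lemma gmap_mem {k : ℕ} {v : List ℕ} (h : v ∈ permsOf (k + 1)) : gmap v ∈ permsOf k := by
  cases v with
  | nil => exact absurd (length_of_mem h) (by simp)
  | cons hd t =>
    have hhd : 1 ≤ hd ∧ hd ≤ k + 1 := bounds_of_mem h (by simp)
    set f : ℕ → ℕ := fun x => if hd < x then x - 1 else x with hf
    have hg : gmap (hd :: t) = t.map f := rfl
    have hperm : t.Perm ((List.range' 1 (k+1)).erase hd) := by
      have := (mem_permsOf.1 h).erase hd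
      rwa [List.erase_cons_head] at this
    rw [mem_permsOf, hg]
    set a := hd - 1 with hA
    set b := k + 1 - hd with hB
    have hsplit : List.range' 1 (k + 1) = List.range' 1 a ++ hd :: List.range' (hd + 1) b := by
      have h1 : List.range' 1 a ++ List.range' (1 + a) (b + 1) = List.range' 1 (b + 1 + a) := by
        simpa [Nat.add_comm] using List.range'_append (s := 1) (m := a) (n := b + 1) (step := 1)
      have h2 : List.range' (1 + a) (b + 1) = (1 + a) :: List.range' (1 + a + 1) b := by
        simpa using List.range'_succ (s := 1 + a) (n := b) (step := 1)
      have h3 : 1 + a = hd := by omega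
      have h4 : b + 1 + a = k + 1 := by omega
      rw [← h4, ← h1, h2, h3]
    have herase : (List.range' 1 (k+1)).erase hd = List.range' 1 a ++ List.range' (hd + 1) b := by
      rw [hsplit, List.erase_append_right, List.erase_cons_head]
      intro hmem
      rw [List.mem_range'_1] at hmem
      omega
    have hmapeq : ((List.range' 1 (k+1)).erase hd).map f = List.range' 1 k := by
      rw [herase, List.map_append]
      have m1 : (List.range' 1 a).map f = List.range' 1 a := by
        have : ∀ x ∈ List.range' 1 a, f x = x := by
          intro x hx
          rw [List.mem_range'_1] at hx
          simp [hf]; omega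
        rw [List.map_congr_left this]
        exact List.map_id' _
      have m2 : (List.range' (hd + 1) b).map f = List.range' hd b := by
        have : ∀ x ∈ List.range' (hd + 1) b, f x = x - 1 := by
          intro x hx
          rw [List.mem_range'_1] at hx
          simp [hf]; omega
        rw [List.map_congr_left this, map_pred_range']
      rw [m1, m2]
      have h5 : hd = 1 + 1 * a := by omega
      have h6 : k = b + a := by omega
      rw [h5, h6]
      exact (List.range'_append (s := 1) (m := a) (n := b) (step := 1)).trans (by rw [Nat.add_comm])
    calc (t.map f).Perm (((List.range' 1 (k+1)).erase hd).map f) := hperm.map f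
    _ = _ := hmapeq
  

lemma path_unique {n : ℕ} (F : ℕ → List ℕ → List ℕ) (p q : Fin (n + 1) → List ℕ)
    (hl : p (Fin.last n) = q (Fin.last n))
    (hp : ∀ k : Fin n, p k.castSucc = F k.1 (p k.succ))
    (hq : ∀ k : Fin n, q k.castSucc = F k.1 (q k.succ)) : p = q := by
  have key : ∀ m, (hm : m ≤ n) → p ⟨n - m, by omega⟩ = q ⟨n - m, by omega⟩ := by
    intro m
    induction m with
    | zero =>
      intro _
      have h0 : (⟨n - 0, by omega⟩ : Fin (n + 1)) = Fin.last n := by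
        apply Fin.ext; simp [Fin.last]
      rw [h0]; exact hl
    | succ m ih =>
      intro hm
      have hm' : m ≤ n := by omega
      have hlt : n - (m + 1) < n := by omega
      set k : Fin n := ⟨n - (m + 1), hlt⟩ with hk
      have hcs : k.castSucc = (⟨n - (m + 1), by omega⟩ : Fin (n + 1)) := by
        apply Fin.ext; simp [hk]
      have hsc : k.succ = (⟨n - m, by omega⟩ : Fin (n + 1)) := by
        apply Fin.ext; simp [hk]; omega
      have e1 := hp k
      have e2 := hq k
      rw [hcs, hsc] at e1 e2
      rw [e1, e2, ih hm']
  funext j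
  have h0 := key (n - j.1) (by omega)
  have hj : (⟨n - (n - j.1), by omega⟩ : Fin (n + 1)) = j := by
    apply Fin.ext; simp; omega
  rwa [hj] at h0

lemma iter_mem {n : ℕ} {w : List ℕ} (hw : w ∈ permsOf n) :
    ∀ j, j ≤ n → gmap^[j] w ∈ permsOf (n - j) := by
  intro j
  induction j with
  | zero => intro _; simpa using hw
  | succ j ih =>
    intro hj
    rw [Function.iterate_succ_apply']
    have h1 := ih (by omega)
    have h2 : n - j = (n - (j + 1)) + 1 := by omega
    rw [h2] at h1
    exact gmap_mem h1

end Stmt7Aux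

open Stmt7Aux

/-- For every permutation `w ∈ S_n`:
(i) the weight generating function of paths `∅ = w₀, w₁, …, w_n = w` (with `w_k ∈ S_k`)
in `Perm`, i.e. the sum of `∏_{k=1}^{n} a(w_{k-1}, w_k)`, equals `q^{inv(w)}`; and
(ii) the corresponding sum of `∏_{k=1}^{n} b(w_{k-1}, w_k)` for `Perm'` equals `1`. -/
theorem stmt_7 (n : ℕ) (w : List ℕ) (hw : w ∈ permsOf n) :
    (∑ᶠ p : {p : Fin (n + 1) → List ℕ //
        (∀ k : Fin (n + 1), p k ∈ permsOf k.1) ∧ p 0 = [] ∧ p (Fin.last n) = w},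
      ∏ k : Fin n, permUp k.1 (p.1 k.castSucc) (p.1 k.succ)) = X ^ invCount w ∧
    (∑ᶠ p : {p : Fin (n + 1) → List ℕ //
        (∀ k : Fin (n + 1), p k ∈ permsOf k.1) ∧ p 0 = [] ∧ p (Fin.last n) = w},
      ∏ k : Fin n, permDown (p.1 k.castSucc) (p.1 k.succ)) = 1 := by
  constructor
  · -- part (i)
    set pA : Fin (n + 1) → List ℕ := fun k => trunc k.1 w with hpA
    have hmemA : ∀ k : Fin (n + 1), pA k ∈ permsOf k.1 := fun k => trunc_mem hw (by omega)
    have h0A : pA 0 = [] := trunc_zero hw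
    have hlastA : pA (Fin.last n) = w := trunc_self hw
    have hrecA : ∀ k : Fin n, pA k.castSucc = (pA k.succ).erase (k.1 + 1) := by
      intro k
      show trunc k.castSucc.1 w = (trunc k.succ.1 w).erase (k.1 + 1)
      rw [show (k.castSucc.1 : ℕ) = k.1 from rfl, show (k.succ.1 : ℕ) = k.1 + 1 from rfl]
      rw [erase_eq_trunc (trunc_mem hw (by omega : k.1 + 1 ≤ n)),
        trunc_trunc (by omega : k.1 ≤ k.1 + 1)]
    set aA : {p : Fin (n + 1) → List ℕ //
        (∀ k : Fin (n + 1), p k ∈ permsOf k.1) ∧ p 0 = [] ∧ p (Fin.last n) = w} :=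
      ⟨pA, hmemA, h0A, hlastA⟩ with haA
    rw [finsum_eq_single _ aA ?_]
    · -- value at canonical path
      have hfac : ∀ k : Fin n, permUp k.1 (aA.1 k.castSucc) (aA.1 k.succ)
          = X ^ (k.1 + 1 - ((trunc (k.1 + 1) w).idxOf (k.1 + 1) + 1)) := by
        intro k
        show permUp k.1 (pA k.castSucc) (pA k.succ) = _
        rw [permUp, if_pos (hrecA k).symm]
        rfl
      rw [Finset.prod_congr rfl (fun k _ => hfac k), Finset.prod_pow_eq_pow_sum,
        sum_exp n w hw]
    · -- uniqueness
      intro x hx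
      by_contra hprod
      apply hx
      have hfac : ∀ k : Fin n, (x.1 k.succ).erase (k.1 + 1) = x.1 k.castSucc := by
        intro k
        by_contra hc
        exact hprod (Finset.prod_eq_zero (Finset.mem_univ k) (by rw [permUp, if_neg hc]))
      apply Subtype.ext
      exact path_unique (fun k v => v.erase (k + 1)) x.1 pA
        (by rw [x.2.2.2, hlastA]) (fun k => (hfac k).symm) hrecA
  · -- part (ii)
    set pB : Fin (n + 1) → List ℕ := fun k => gmap^[n - k.1] w with hpB
    have hmemB : ∀ k : Fin (n + 1), pB k ∈ permsOf k.1 := by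
      intro k
      have := iter_mem hw (n - k.1) (by omega)
      rwa [show n - (n - k.1) = k.1 by omega] at this
    have h0B : pB 0 = [] := permsOf_zero (hmemB 0)
    have hlastB : pB (Fin.last n) = w := by
      show gmap^[n - (Fin.last n).1] w = w
      simp [Fin.last]
    have hrecB : ∀ k : Fin n, pB k.castSucc = gmap (pB k.succ) := by
      intro k
      show gmap^[n - k.castSucc.1] w = gmap (gmap^[n - k.succ.1] w)
      rw [show (k.castSucc.1 : ℕ) = k.1 from rfl, show (k.succ.1 : ℕ) = k.1 + 1 from rfl]
      rw [show n - k.1 = (n - (k.1 + 1)) + 1 by omega, Function.iterate_succ_apply']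
    set aB : {p : Fin (n + 1) → List ℕ //
        (∀ k : Fin (n + 1), p k ∈ permsOf k.1) ∧ p 0 = [] ∧ p (Fin.last n) = w} :=
      ⟨pB, hmemB, h0B, hlastB⟩ with haB
    rw [finsum_eq_single _ aB ?_]
    · have hfac : ∀ k : Fin n, permDown (aB.1 k.castSucc) (aB.1 k.succ) = 1 := by
        intro k
        show permDown (pB k.castSucc) (pB k.succ) = 1
        rw [permDown]
        exact if_pos (hrecB k)
      rw [Finset.prod_congr rfl (fun k _ => hfac k)]
      simp
    · intro x hx
      by_contra hprod
      apply hx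
      have hfac : ∀ k : Fin n, x.1 k.castSucc = gmap (x.1 k.succ) := by
        intro k
        by_contra hc
        exact hprod (Finset.prod_eq_zero (Finset.mem_univ k) (by rw [permDown]; exact if_neg hc))
      apply Subtype.ext
      exact path_unique (fun _ v => gmap v) x.1 pB
        (by rw [x.2.2.2, hlastB]) hfac hrecB
end

section
/- Fix a positive integer r. Consider words over the alphabet {1_1, 1_2, …, 1_r, 2}, where each letter 1_j has value 1 and the letter 2 has value 2; the height h(w) of a word w is the sum of the values of its letters. For words v, w with h(w) = h(v) + 1, say (v, w) is an edge of form (1) if v is obtained from w by removing the leftmost letter of value 1, and of form (2) if v is obtained from w by changing some occurrence of 2 into one of the letters 1_1, …, 1_r such that all letters to the left of that occurrence are also 2's. Let s(v,w) be the number of letters of w preceding the removed or changed letter. Define m(v,w) = q^{s(v,w)} for form (1) and m(v,w) = q^{s(v,w)+1} for form (2); define m'(v,w) = q^{s(v,w)} for both forms; set m(v,w) = m'(v,w) = 0 if (v,w) is not an edge. Then for all words u, v with h(u) = h(v): ∑_{w} m(u,w)·m'(v,w) = q·∑_{x} m'(x,u)·m(x,v) + r·δ_{u,v}, as an identity in ℤ[q].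 -/
open Polynomial
open scoped Classical

/-- A letter of the quantized `r`-Fibonacci poset: `some j` is the letter `1_j`
(for `j = 1, …, r`, of value `1`) and `none` is the letter `2` (of value `2`). -/
abbrev FibLetter (r : ℕ) := Option (Fin r)

/-- The value of a letter: each `1_j` has value `1`, the letter `2` has value `2`. -/
def letterValue {r : ℕ} : FibLetter r → ℕ
  | some _ => 1
  | none => 2

/-- The height of a word: the sum of the values of its letters. -/
def fibHeight {r : ℕ} (w : List (FibLetter r)) : ℕ :=
  (w.map letterValue).sum

/-- The up-weight `m(v,w)` in `Fib_(r)` (with `q = X ∈ ℤ[q]`): it is `q^{s(v,w)}` if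
`(v,w)` is an edge of form (1), i.e. `v` is obtained from `w` by removing the leftmost
letter of value `1` (at position `k`, preceded by `s(v,w) = k` letters, all of value 2);
it is `q^{s(v,w)+1}` if `(v,w)` is an edge of form (2), i.e. `v` is obtained from `w` by
changing an occurrence of `2` (all letters to whose left are also `2`'s) into one of the
letters `1_1, …, 1_r`; and it is `0` otherwise.  At most one summand below is nonzero. -/
noncomputable def fibUp (r : ℕ) (v w : List (FibLetter r)) : Polynomial ℤ :=
  (∑ k ∈ Finset.range w.length,
    if (∀ x ∈ w.take k, x = none) ∧ (∃ j : Fin r, w[k]? = some (some j)) ∧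
        v = w.eraseIdx k
    then X ^ k else 0) +
  (∑ k ∈ Finset.range w.length, ∑ j : Fin r,
    if (∀ x ∈ w.take k, x = none) ∧ w[k]? = some none ∧ v = w.set k (some j)
    then X ^ (k + 1) else 0)

/-- The down-weight `m'(v,w)` in `Fib'_(r)`: defined like `fibUp` but with weight
`q^{s(v,w)}` for edges of both forms (1) and (2). -/
noncomputable def fibDown (r : ℕ) (v w : List (FibLetter r)) : Polynomial ℤ :=
  (∑ k ∈ Finset.range w.length,
    if (∀ x ∈ w.take k, x = none) ∧ (∃ j : Fin r, w[k]? = some (some j)) ∧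
        v = w.eraseIdx k
    then X ^ k else 0) +
  (∑ k ∈ Finset.range w.length, ∑ j : Fin r,
    if (∀ x ∈ w.take k, x = none) ∧ w[k]? = some none ∧ v = w.set k (some j)
    then X ^ k else 0)

/-! ### Auxiliary list lemmas -/

section Aux

set_option maxHeartbeats 1000000

lemma FibAux.lemE {r : ℕ} (m : ℕ) (y x : List (FibLetter r)) (j : Fin r) :
    ((∀ a ∈ y.take m, a = none) ∧ y[m]? = some (some j) ∧ x = none :: y.eraseIdx m)
    ↔ ((∀ a ∈ x.take m, a = none) ∧ x[m]? = some none ∧ y = x.set m (some j)) := by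
  induction m generalizing y x with
  | zero =>
    cases y with
    | nil => cases x <;> simp
    | cons a y' =>
      cases x with
      | nil => simp
      | cons b x' =>
        simp only [List.take_zero, List.not_mem_nil, false_implies, implies_true, true_and,
          List.getElem?_cons_zero, List.eraseIdx_cons_zero, List.set]
        constructor
        · rintro ⟨h1, h2⟩
          injection h2 with h2a h2b
          injection h1 with h1'
          exact ⟨by rw [h2a], by rw [h1', h2b]⟩
        · rintro ⟨h1, h2⟩
          injection h2 with h2a h2b
          injection h1 with h1'
          exact ⟨by rw [h2a], by rw [h1', h2b]⟩
  | succ m ih =>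
    cases y with
    | nil => cases x <;> simp
    | cons a y' =>
      cases x with
      | nil => simp
      | cons b x' =>
        simp only [List.take_succ_cons, List.mem_cons, List.getElem?_cons_succ,
          List.eraseIdx_cons_succ, List.set, List.cons.injEq, forall_eq_or_imp]
        constructor
        · rintro ⟨⟨ha, hp⟩, hg, hb, hx⟩
          subst ha
          have := (ih y' x').mp ⟨hp, hg, hx⟩
          exact ⟨⟨hb, this.1⟩, this.2.1, hb.symm, this.2.2⟩
        · rintro ⟨⟨hb, hp⟩, hg, hab, hy⟩
          subst hb; subst hab
          have := (ih y' x').mpr ⟨hp, hg, hy⟩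
          exact ⟨⟨rfl, this.1⟩, this.2.1, rfl, this.2.2⟩

lemma FibAux.lemE2 {r : ℕ} (m : ℕ) (x y : List (FibLetter r)) (j : Fin r) :
    ((∀ a ∈ x.take (m+1), a = none) ∧ x[m+1]? = some (some j) ∧ y = x.eraseIdx (m+1))
    ↔ ((∀ a ∈ y.take m, a = none) ∧ y[m]? = some none ∧ x = none :: y.set m (some j)) := by
  cases x with
  | nil => simp
  | cons c x₀ =>
    simp only [List.take_succ_cons, List.mem_cons, forall_eq_or_imp, List.getElem?_cons_succ,
      List.eraseIdx_cons_succ, List.cons.injEq]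
    constructor
    · rintro ⟨⟨hc, hp⟩, hg, hy⟩
      subst hc
      have := (FibAux.lemE m x₀ y j).mp ⟨hp, hg, hy⟩
      exact ⟨this.1, this.2.1, rfl, this.2.2⟩
    · rintro ⟨hp, hg, hc, hx⟩
      subst hc
      have := (FibAux.lemE m x₀ y j).mpr ⟨hp, hg, hx⟩
      exact ⟨⟨rfl, this.1⟩, this.2.1, this.2.2⟩

lemma FibAux.lemE0 {r : ℕ} (x y : List (FibLetter r)) (j : Fin r) :
    (x = some j :: y) ↔ (x[0]? = some (some j) ∧ y = x.eraseIdx 0) := by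
  cases x with
  | nil => simp
  | cons c x₀ =>
    simp only [List.cons.injEq, List.getElem?_cons_zero, Option.some.injEq,
      List.eraseIdx_cons_zero]
    constructor
    · rintro ⟨h1, h2⟩; exact ⟨h1, h2.symm⟩
    · rintro ⟨h1, h2⟩; exact ⟨h1, h2.symm⟩

lemma FibAux.uniqAux {r : ℕ} {x y : List (FibLetter r)} {m : ℕ} (hx : x[m]? = some none)
    {j j' : Fin r} (h1 : y = x.set m (some j)) (h2 : y = x.set m (some j')) : j = j' := by
  have hm : m < x.length := (List.getElem?_eq_some_iff.mp hx).1
  have e1 : (x.set m (some j))[m]? = some (some j) := by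
    exact List.getElem?_set_self hm
  have e2 : (x.set m (some j'))[m]? = some (some j') := by
    exact List.getElem?_set_self hm
  rw [← h1] at e1
  rw [← h2] at e2
  rw [e1] at e2
  simpa using e2

lemma FibAux.sum_ite_exists {r : ℕ} (p : Fin r → Prop) {dp : DecidablePred p}
    {de : Decidable (∃ j, p j)} (hu : ∀ j j', p j → p j' → j = j') (c : Polynomial ℤ) :
    (∑ j : Fin r, if p j then c else 0) = if ∃ j, p j then c else 0 := by
  by_cases h : ∃ j, p j
  · obtain ⟨j₀, hj⟩ := h
    rw [if_pos ⟨j₀, hj⟩, Finset.sum_eq_single j₀]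
    · rw [if_pos hj]
    · intro b _ hb
      exact if_neg fun hpb => hb (hu b j₀ hpb hj)
    · intro hj₀; exact absurd (Finset.mem_univ j₀) hj₀
  · rw [if_neg h]
    exact Finset.sum_eq_zero fun j _ => if_neg fun hj => h ⟨j, hj⟩

/-- Key matching 1: form-(1) moves seen from `none :: y` correspond to
form-(2) moves seen from `x`. -/
lemma FibAux.key1 {r : ℕ} (x y : List (FibLetter r)) :
    (∑ k ∈ Finset.range y.length,
      if (∀ a ∈ y.take k, a = none) ∧ (∃ j : Fin r, y[k]? = some (some j)) ∧
          x = none :: y.eraseIdx k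
      then (X : Polynomial ℤ) ^ (k+1) else 0)
    = ∑ k ∈ Finset.range x.length, ∑ j : Fin r,
        if (∀ a ∈ x.take k, a = none) ∧ x[k]? = some none ∧ y = x.set k (some j)
        then (X : Polynomial ℤ) ^ (k+1) else 0 := by
  have e1 : (∑ k ∈ Finset.range y.length,
      if (∀ a ∈ y.take k, a = none) ∧ (∃ j : Fin r, y[k]? = some (some j)) ∧
          x = none :: y.eraseIdx k
      then (X : Polynomial ℤ) ^ (k+1) else 0)
      = ∑ k ∈ Finset.range (y.length + x.length),
      if (∀ a ∈ y.take k, a = none) ∧ (∃ j : Fin r, y[k]? = some (some j)) ∧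
          x = none :: y.eraseIdx k
      then (X : Polynomial ℤ) ^ (k+1) else 0 := by
    refine Finset.sum_subset (Finset.range_subset_range.2 (Nat.le_add_right _ _)) ?_
    intro k _ hk
    rw [if_neg]
    rintro ⟨-, ⟨j, hj⟩, -⟩
    rw [List.getElem?_eq_none (le_of_not_gt (fun h => hk (Finset.mem_range.2 h)))] at hj
    exact nomatch hj
  have e2 : (∑ k ∈ Finset.range x.length, ∑ j : Fin r,
        if (∀ a ∈ x.take k, a = none) ∧ x[k]? = some none ∧ y = x.set k (some j)
        then (X : Polynomial ℤ) ^ (k+1) else 0)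
      = ∑ k ∈ Finset.range (y.length + x.length), ∑ j : Fin r,
        if (∀ a ∈ x.take k, a = none) ∧ x[k]? = some none ∧ y = x.set k (some j)
        then (X : Polynomial ℤ) ^ (k+1) else 0 := by
    refine Finset.sum_subset (Finset.range_subset_range.2 (Nat.le_add_left _ _)) ?_
    intro k _ hk
    refine Finset.sum_eq_zero fun j _ => ?_
    rw [if_neg]
    rintro ⟨-, hj, -⟩
    rw [List.getElem?_eq_none (le_of_not_gt (fun h => hk (Finset.mem_range.2 h)))] at hj
    exact nomatch hj
  rw [e1, e2]
  refine Finset.sum_congr rfl fun k _ => ?_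
  have hs : (∑ j : Fin r,
      if (∀ a ∈ x.take k, a = none) ∧ x[k]? = some none ∧ y = x.set k (some j)
      then (X : Polynomial ℤ) ^ (k+1) else 0)
      = if (∃ j : Fin r, (∀ a ∈ x.take k, a = none) ∧ x[k]? = some none ∧
            y = x.set k (some j))
        then (X : Polynomial ℤ) ^ (k+1) else 0 :=
    FibAux.sum_ite_exists
      (fun j : Fin r => (∀ a ∈ x.take k, a = none) ∧ x[k]? = some none ∧
        y = x.set k (some j))
      (fun j j' h h' => FibAux.uniqAux h.2.1 h.2.2 h'.2.2) _
  rw [hs]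
  refine if_congr ?_ rfl rfl
  constructor
  · rintro ⟨hp, ⟨j, hj⟩, hx⟩
    exact ⟨j, (FibAux.lemE k y x j).mp ⟨hp, hj, hx⟩⟩
  · rintro ⟨j, hd⟩
    obtain ⟨h1, h2, h3⟩ := (FibAux.lemE k y x j).mpr hd
    exact ⟨h1, ⟨j, h2⟩, h3⟩

/-- Key matching 2: form-(2) moves seen from `none :: y` correspond to
form-(1) moves seen from `x`, with an arbitrary weight function `c`. -/
lemma FibAux.key2 {r : ℕ} (x y : List (FibLetter r)) (c : ℕ → Polynomial ℤ) :
    ((∑ k ∈ Finset.range y.length, ∑ j : Fin r,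
      if (∀ a ∈ y.take k, a = none) ∧ y[k]? = some none ∧
          x = none :: y.set k (some j)
      then c (k+1) else 0)
     + ∑ j : Fin r, if x = some j :: y then c 0 else 0)
    = ∑ k ∈ Finset.range x.length,
        if (∀ a ∈ x.take k, a = none) ∧ (∃ j : Fin r, x[k]? = some (some j)) ∧
            y = x.eraseIdx k
        then c k else 0 := by
  have e1 : (∑ k ∈ Finset.range y.length, ∑ j : Fin r,
      if (∀ a ∈ y.take k, a = none) ∧ y[k]? = some none ∧
          x = none :: y.set k (some j)
      then c (k+1) else 0)
      = ∑ k ∈ Finset.range (y.length + x.length), ∑ j : Fin r,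
      if (∀ a ∈ y.take k, a = none) ∧ y[k]? = some none ∧
          x = none :: y.set k (some j)
      then c (k+1) else 0 := by
    refine Finset.sum_subset (Finset.range_subset_range.2 (Nat.le_add_right _ _)) ?_
    intro k _ hk
    refine Finset.sum_eq_zero fun j _ => ?_
    rw [if_neg]
    rintro ⟨-, hj, -⟩
    rw [List.getElem?_eq_none (le_of_not_gt (fun h => hk (Finset.mem_range.2 h)))] at hj
    exact nomatch hj
  have e2 : (∑ k ∈ Finset.range x.length,
        if (∀ a ∈ x.take k, a = none) ∧ (∃ j : Fin r, x[k]? = some (some j)) ∧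
            y = x.eraseIdx k
        then c k else 0)
      = ∑ k ∈ Finset.range (y.length + x.length + 1),
        if (∀ a ∈ x.take k, a = none) ∧ (∃ j : Fin r, x[k]? = some (some j)) ∧
            y = x.eraseIdx k
        then c k else 0 := by
    refine Finset.sum_subset (Finset.range_subset_range.2 (by omega)) ?_
    intro k _ hk
    rw [if_neg]
    rintro ⟨-, ⟨j, hj⟩, -⟩
    rw [List.getElem?_eq_none (le_of_not_gt (fun h => hk (Finset.mem_range.2 h)))] at hj
    exact nomatch hj
  rw [e1, e2, Finset.sum_range_succ']
  congr 1
  · refine Finset.sum_congr rfl fun k _ => ?_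
    have hs : (∑ j : Fin r,
        if (∀ a ∈ y.take k, a = none) ∧ y[k]? = some none ∧
            x = none :: y.set k (some j)
        then c (k+1) else 0)
        = if (∃ j : Fin r, (∀ a ∈ y.take k, a = none) ∧ y[k]? = some none ∧
              x = none :: y.set k (some j))
          then c (k+1) else 0 :=
      FibAux.sum_ite_exists
        (fun j : Fin r => (∀ a ∈ y.take k, a = none) ∧ y[k]? = some none ∧
          x = none :: y.set k (some j))
        (fun j j' h h' => by
          have t1 := h.2.2; have t2 := h'.2.2
          rw [t1] at t2
          injection t2 with _ t3
          exact FibAux.uniqAux h.2.1 rfl t3) _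
    rw [hs]
    refine (if_congr ?_ rfl rfl).symm
    constructor
    · rintro ⟨hp, ⟨j, hj⟩, hx⟩
      exact ⟨j, (FibAux.lemE2 k x y j).mp ⟨hp, hj, hx⟩⟩
    · rintro ⟨j, hd⟩
      obtain ⟨h1, h2, h3⟩ := (FibAux.lemE2 k x y j).mpr hd
      exact ⟨h1, ⟨j, h2⟩, h3⟩
  · have hs : (∑ j : Fin r, if x = some j :: y then c 0 else 0)
        = if (∃ j : Fin r, x = some j :: y) then c 0 else 0 :=
      FibAux.sum_ite_exists (fun j : Fin r => x = some j :: y) (fun j j' h h' => by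
        rw [h] at h'; injection h' with h'' _; exact Option.some_injective _ h'') _
    rw [hs]
    refine (if_congr ?_ rfl rfl).symm
    constructor
    · rintro ⟨-, ⟨j, hj⟩, hx⟩
      exact ⟨j, (FibAux.lemE0 x y j).mpr ⟨hj, hx⟩⟩
    · rintro ⟨j, hd⟩
      obtain ⟨h1, h2⟩ := (FibAux.lemE0 x y j).mp hd
      exact ⟨by simp, ⟨j, h1⟩, h2⟩

/-- Shift lemma for the up-weight: `m(x, 2y) = q · m'(y, x)`. -/
lemma FibAux.shift_up {r : ℕ} (x y : List (FibLetter r)) :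
    fibUp r x (none :: y) = X * fibDown r y x := by
  unfold fibUp fibDown
  simp only [List.length_cons]
  rw [Finset.sum_range_succ', Finset.sum_range_succ']
  simp only [List.take_succ_cons, List.take_zero, List.mem_cons, forall_eq_or_imp,
    List.not_mem_nil, false_implies, implies_true, and_true, true_and,
    List.getElem?_cons_succ, List.getElem?_cons_zero, List.eraseIdx_cons_succ,
    List.eraseIdx_cons_zero, Option.some.injEq, List.set_cons_succ, List.set_cons_zero,
    eq_self_iff_true, exists_false, if_false, reduceCtorEq, false_and, and_false,
    Finset.sum_const_zero, add_zero, pow_zero]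
  rw [mul_add]
  have r1 : (X : Polynomial ℤ) * (∑ k ∈ Finset.range x.length,
      if (∀ a ∈ x.take k, a = none) ∧ (∃ j : Fin r, x[k]? = some (some j)) ∧
          y = x.eraseIdx k
      then (X : Polynomial ℤ) ^ k else 0)
      = ∑ k ∈ Finset.range x.length,
      if (∀ a ∈ x.take k, a = none) ∧ (∃ j : Fin r, x[k]? = some (some j)) ∧
          y = x.eraseIdx k
      then (X : Polynomial ℤ) ^ (k+1) else 0 := by
    rw [Finset.mul_sum]
    refine Finset.sum_congr rfl fun k _ => ?_
    rw [mul_ite, mul_zero, ← pow_succ']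
  have r2 : (X : Polynomial ℤ) * (∑ k ∈ Finset.range x.length, ∑ j : Fin r,
      if (∀ a ∈ x.take k, a = none) ∧ x[k]? = some none ∧ y = x.set k (some j)
      then (X : Polynomial ℤ) ^ k else 0)
      = ∑ k ∈ Finset.range x.length, ∑ j : Fin r,
      if (∀ a ∈ x.take k, a = none) ∧ x[k]? = some none ∧ y = x.set k (some j)
      then (X : Polynomial ℤ) ^ (k+1) else 0 := by
    rw [Finset.mul_sum]
    refine Finset.sum_congr rfl fun k _ => ?_
    rw [Finset.mul_sum]
    refine Finset.sum_congr rfl fun j _ => ?_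
    rw [mul_ite, mul_zero, ← pow_succ']
  rw [r1, r2]
  have k2 := FibAux.key2 x y (fun k => (X : Polynomial ℤ) ^ (k+1))
  rw [FibAux.key1 x y, k2]
  exact add_comm _ _

/-- Shift lemma for the down-weight: `m'(x, 2y) = m(y, x)`. -/
lemma FibAux.shift_down {r : ℕ} (x y : List (FibLetter r)) :
    fibDown r x (none :: y) = fibUp r y x := by
  unfold fibUp fibDown
  simp only [List.length_cons]
  rw [Finset.sum_range_succ', Finset.sum_range_succ']
  simp only [List.take_succ_cons, List.take_zero, List.mem_cons, forall_eq_or_imp,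
    List.not_mem_nil, false_implies, implies_true, and_true, true_and,
    List.getElem?_cons_succ, List.getElem?_cons_zero, List.eraseIdx_cons_succ,
    List.eraseIdx_cons_zero, Option.some.injEq, List.set_cons_succ, List.set_cons_zero,
    eq_self_iff_true, exists_false, if_false, reduceCtorEq, false_and, and_false,
    Finset.sum_const_zero, add_zero, pow_zero]
  have k2 := FibAux.key2 x y (fun k => (X : Polynomial ℤ) ^ k)
  simp only [pow_zero] at k2
  rw [FibAux.key1 x y, k2]
  exact add_comm _ _

lemma FibAux.fibUp_nil {r : ℕ} (u : List (FibLetter r)) : fibUp r u [] = 0 := by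
  simp [fibUp]

lemma FibAux.fibUp_cons_some {r : ℕ} (u t : List (FibLetter r)) (j : Fin r) :
    fibUp r u (some j :: t) = if u = t then 1 else 0 := by
  unfold fibUp
  simp only [List.length_cons]
  rw [Finset.sum_range_succ', Finset.sum_range_succ']
  have h1 : ∀ k ∈ Finset.range t.length,
      (if (∀ x ∈ (some j :: t).take (k+1), x = none) ∧
          (∃ j' : Fin r, (some j :: t)[k+1]? = some (some j')) ∧
          u = (some j :: t).eraseIdx (k+1)
       then (X : Polynomial ℤ) ^ (k+1) else 0) = 0 := by
    intro k _
    rw [if_neg]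
    rintro ⟨hp, -⟩
    exact absurd (hp (some j) (by simp [List.take_succ_cons])) (by simp)
  have h2 : ∀ k ∈ Finset.range t.length,
      (∑ j' : Fin r, if (∀ x ∈ (some j :: t).take (k+1), x = none) ∧
          (some j :: t)[k+1]? = some none ∧ u = (some j :: t).set (k+1) (some j')
       then (X : Polynomial ℤ) ^ (k+1+1) else 0) = 0 := by
    intro k _
    refine Finset.sum_eq_zero fun j' _ => ?_
    rw [if_neg]
    rintro ⟨hp, -⟩
    exact absurd (hp (some j) (by simp [List.take_succ_cons])) (by simp)
  rw [Finset.sum_congr rfl h1, Finset.sum_congr rfl h2]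
  simp

lemma FibAux.fibDown_cons_some {r : ℕ} (u t : List (FibLetter r)) (j : Fin r) :
    fibDown r u (some j :: t) = if u = t then 1 else 0 := by
  unfold fibDown
  simp only [List.length_cons]
  rw [Finset.sum_range_succ', Finset.sum_range_succ']
  have h1 : ∀ k ∈ Finset.range t.length,
      (if (∀ x ∈ (some j :: t).take (k+1), x = none) ∧
          (∃ j' : Fin r, (some j :: t)[k+1]? = some (some j')) ∧
          u = (some j :: t).eraseIdx (k+1)
       then (X : Polynomial ℤ) ^ (k+1) else 0) = 0 := by
    intro k _
    rw [if_neg]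
    rintro ⟨hp, -⟩
    exact absurd (hp (some j) (by simp [List.take_succ_cons])) (by simp)
  have h2 : ∀ k ∈ Finset.range t.length,
      (∑ j' : Fin r, if (∀ x ∈ (some j :: t).take (k+1), x = none) ∧
          (some j :: t)[k+1]? = some none ∧ u = (some j :: t).set (k+1) (some j')
       then (X : Polynomial ℤ) ^ (k+1) else 0) = 0 := by
    intro k _
    refine Finset.sum_eq_zero fun j' _ => ?_
    rw [if_neg]
    rintro ⟨hp, -⟩
    exact absurd (hp (some j) (by simp [List.take_succ_cons])) (by simp)
  rw [Finset.sum_congr rfl h1, Finset.sum_congr rfl h2]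
  simp

lemma FibAux.ins_erase {α : Type*} : ∀ (k : ℕ) (w : List α) (a : α),
    w[k]? = some a → (w.eraseIdx k).insertIdx k a = w := by
  intro k
  induction k with
  | zero => intro w a h; cases w with
    | nil => simp at h
    | cons b w' =>
      simp only [List.getElem?_cons_zero, Option.some.injEq] at h
      simp [List.eraseIdx_cons_zero, h]
  | succ k ih => intro w a h; cases w with
    | nil => simp at h
    | cons b w' =>
      simp only [List.getElem?_cons_succ] at h
      rw [List.eraseIdx_cons_succ, List.insertIdx_succ_cons, ih w' a h]

lemma FibAux.set_self {α : Type*} : ∀ (k : ℕ) (w : List α) (a : α),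
    w[k]? = some a → w.set k a = w := by
  intro k
  induction k with
  | zero => intro w a h; cases w with
    | nil => simp at h
    | cons b w' =>
      simp only [List.getElem?_cons_zero, Option.some.injEq] at h
      simp [h]
  | succ k ih => intro w a h; cases w with
    | nil => simp at h
    | cons b w' =>
      simp only [List.getElem?_cons_succ] at h
      simp [List.set, ih w' a h]

lemma FibAux.up_support_finite {r : ℕ} (u : List (FibLetter r)) :
    {w : List (FibLetter r) | fibUp r u w ≠ 0}.Finite := by
  have hfin : ((Set.range fun p : Fin (u.length+1) × Fin r =>
        u.insertIdx p.1 (some p.2)) ∪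
      (Set.range fun k : Fin (u.length+1) => u.set k none)).Finite :=
    (Set.finite_range _).union (Set.finite_range _)
  refine hfin.subset ?_
  intro w hw
  by_contra hmem
  apply hw
  unfold fibUp
  rw [Finset.sum_eq_zero, Finset.sum_eq_zero, add_zero]
  · intro k hk
    refine Finset.sum_eq_zero fun j _ => if_neg ?_
    rintro ⟨-, hg, hs⟩
    apply hmem
    right
    have hkw : k < w.length := Finset.mem_range.1 hk
    have hlen : u.length = w.length := by rw [hs]; simp
    refine ⟨⟨k, by omega⟩, ?_⟩
    show u.set k none = w
    rw [hs, List.set_set, FibAux.set_self k w none hg]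
  · intro k hk
    refine if_neg ?_
    rintro ⟨-, ⟨j, hj⟩, he⟩
    apply hmem
    left
    have hkw : k < w.length := Finset.mem_range.1 hk
    have hlen : u.length = w.length - 1 := by
      rw [he, List.length_eraseIdx]; simp [hkw]
    refine ⟨(⟨k, by omega⟩, j), ?_⟩
    show u.insertIdx k (some j) = w
    rw [he, FibAux.ins_erase k w (some j) hj]

lemma FibAux.down_support_finite {r : ℕ} (u : List (FibLetter r)) :
    {x : List (FibLetter r) | fibDown r x u ≠ 0}.Finite := by
  have hfin : ((Set.range fun k : Fin (u.length+1) => u.eraseIdx k) ∪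
      (Set.range fun p : Fin (u.length+1) × Fin r => u.set p.1 (some p.2))).Finite :=
    (Set.finite_range _).union (Set.finite_range _)
  refine hfin.subset ?_
  intro x hx
  by_contra hmem
  apply hx
  unfold fibDown
  rw [Finset.sum_eq_zero, Finset.sum_eq_zero, add_zero]
  · intro k hk
    refine Finset.sum_eq_zero fun j _ => if_neg ?_
    rintro ⟨-, -, hs⟩
    exact hmem (Or.inr ⟨(⟨k, by have := Finset.mem_range.1 hk; omega⟩, j), hs.symm⟩)
  · intro k hk
    refine if_neg ?_
    rintro ⟨-, -, he⟩
    exact hmem (Or.inl ⟨⟨k, by have := Finset.mem_range.1 hk; omega⟩, he.symm⟩)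

lemma FibAux.finsum_split_list {α M : Type*} [AddCommMonoid M] (f : List α → M)
    (hf : (Function.support f).Finite) :
    ∑ᶠ w, f w = f [] + ∑ᶠ p : α × List α, f (p.1 :: p.2) := by
  have hcons : Function.Injective (fun p : α × List α => p.1 :: p.2) := by
    rintro ⟨a, l⟩ ⟨b, m⟩ h
    simpa [Prod.ext_iff] using h
  have huniv : (Set.univ : Set (List α))
      = {[]} ∪ Set.range (fun p : α × List α => p.1 :: p.2) := by
    ext l
    cases l with
    | nil => simp
    | cons a t =>
      have : (a :: t) ∈ Set.range (fun p : α × List α => p.1 :: p.2) := ⟨⟨a, t⟩, rfl⟩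
      simp only [Set.mem_union, Set.mem_univ, true_iff]
      exact Or.inr this
  have hdisj : Disjoint ({[]} : Set (List α))
      (Set.range (fun p : α × List α => p.1 :: p.2)) := by
    rw [Set.disjoint_left]
    rintro l hl ⟨⟨a, t⟩, h⟩
    rw [Set.mem_singleton_iff.1 hl] at h
    simp at h
  rw [← finsum_mem_univ f, huniv,
    finsum_mem_union' hdisj ((Set.finite_singleton _).inter_of_left _)
      (hf.inter_of_right _),
    finsum_mem_singleton, finsum_mem_range hcons]

lemma FibAux.finsum_split_opt {β γ M : Type*} [AddCommMonoid M] (g : Option β × γ → M)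
    (hg : (Function.support g).Finite) :
    ∑ᶠ p, g p = (∑ᶠ q : β × γ, g (some q.1, q.2)) + ∑ᶠ t : γ, g (none, t) := by
  have h1 : Function.Injective (fun q : β × γ => ((some q.1, q.2) : Option β × γ)) := by
    rintro ⟨a, l⟩ ⟨b, m⟩ h
    simpa [Prod.ext_iff] using h
  have h2 : Function.Injective (fun t : γ => ((none, t) : Option β × γ)) := by
    intro a b h
    simpa [Prod.ext_iff] using h
  have huniv : (Set.univ : Set (Option β × γ))
      = Set.range (fun q : β × γ => ((some q.1, q.2) : Option β × γ))
        ∪ Set.range (fun t : γ => ((none, t) : Option β × γ)) := by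
    ext ⟨o, t⟩
    cases o with
    | none => simp
    | some b => simp [Set.mem_union, Set.mem_range, Prod.ext_iff]
  have hdisj : Disjoint
      (Set.range (fun q : β × γ => ((some q.1, q.2) : Option β × γ)))
      (Set.range (fun t : γ => ((none, t) : Option β × γ))) := by
    rw [Set.disjoint_left]
    rintro p ⟨⟨b, t⟩, h⟩ ⟨s, h'⟩
    rw [← h'] at h
    simp at h
  rw [← finsum_mem_univ g, huniv,
    finsum_mem_union' hdisj (hg.inter_of_right _) (hg.inter_of_right _),
    finsum_mem_range h1, finsum_mem_range h2]

end Aux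

/-- The quantized `r`-Fibonacci poset `(Fib_(r), Fib'_(r))` is a
quantized dual graded graph with differential coefficient `r`: for all words `u, v` over
the alphabet `{1_1, …, 1_r, 2}` with `h(u) = h(v)`,
`∑_w m(u,w)·m'(v,w) = q·∑_x m'(x,u)·m(x,v) + r·δ_{u,v}` in `ℤ[q]`. -/
theorem stmt_8 (r : ℕ) (hr : 0 < r) (u v : List (FibLetter r))
    (huv : fibHeight u = fibHeight v) :
    (∑ᶠ w : List (FibLetter r), fibUp r u w * fibDown r v w)
      = X * (∑ᶠ x : List (FibLetter r), fibDown r x u * fibUp r x v)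
        + (r : Polynomial ℤ) * (if u = v then 1 else 0) := by
  classical
  have hFs : (Function.support fun w : List (FibLetter r) =>
      fibUp r u w * fibDown r v w).Finite :=
    (FibAux.up_support_finite u).subset fun w hw => left_ne_zero_of_mul hw
  have hBs : (Function.support fun t : List (FibLetter r) =>
      fibDown r t u * fibUp r t v).Finite :=
    (FibAux.down_support_finite u).subset fun t ht => left_ne_zero_of_mul ht
  rw [FibAux.finsum_split_list (fun w => fibUp r u w * fibDown r v w) hFs]
  have hGs : (Function.support fun p : FibLetter r × List (FibLetter r) =>
      fibUp r u (p.1 :: p.2) * fibDown r v (p.1 :: p.2)).Finite := by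
    have hcons : Function.Injective
        (fun p : FibLetter r × List (FibLetter r) => p.1 :: p.2) := by
      rintro ⟨a, l⟩ ⟨b, m⟩ h
      simpa [Prod.ext_iff] using h
    exact Set.Finite.preimage (hcons.injOn) hFs
  rw [FibAux.finsum_split_opt
    (fun p : FibLetter r × List (FibLetter r) =>
      fibUp r u (p.1 :: p.2) * fibDown r v (p.1 :: p.2)) hGs]
  have hterm1 : (∑ᶠ q : Fin r × List (FibLetter r),
      fibUp r u (some q.1 :: q.2) * fibDown r v (some q.1 :: q.2))
      = (r : Polynomial ℤ) * (if u = v then 1 else 0) := by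
    have hcongr : ∀ q : Fin r × List (FibLetter r),
        fibUp r u (some q.1 :: q.2) * fibDown r v (some q.1 :: q.2)
        = if q.2 = u ∧ u = v then 1 else 0 := by
      intro q
      rw [FibAux.fibUp_cons_some, FibAux.fibDown_cons_some]
      by_cases hu : u = q.2 <;> by_cases hv : v = q.2
      · rw [if_pos hu, if_pos hv, if_pos ⟨hu.symm, hu.trans hv.symm⟩, one_mul]
      · rw [if_pos hu, if_neg hv, mul_zero, if_neg (fun h => hv (h.2.symm.trans hu))]
      · rw [if_neg hu, zero_mul, if_neg (fun h => hu h.1.symm)]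
      · rw [if_neg hu, zero_mul, if_neg (fun h => hu h.1.symm)]
    rw [finsum_congr hcongr]
    rw [finsum_eq_finset_sum_of_support_subset _
      (s := (Finset.univ : Finset (Fin r)) ×ˢ ({u} : Finset (List (FibLetter r))))]
    · rw [Finset.sum_product]
      by_cases h : u = v
      · subst h; simp [Finset.card_univ]
      · simp [h]
    · intro q hq
      have : q.2 = u ∧ u = v := by
        by_contra hc
        simp [hc] at hq
      simp only [Finset.coe_product, Finset.coe_univ, Finset.coe_singleton,
        Set.mem_prod, Set.mem_univ, Set.mem_singleton_iff, true_and]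
      exact this.1
  have hterm2 : (∑ᶠ t : List (FibLetter r),
      fibUp r u (none :: t) * fibDown r v (none :: t))
      = X * ∑ᶠ x : List (FibLetter r), fibDown r x u * fibUp r x v := by
    have hcongr : ∀ t : List (FibLetter r),
        fibUp r u (none :: t) * fibDown r v (none :: t)
        = X * (fibDown r t u * fibUp r t v) := by
      intro t
      rw [FibAux.shift_up, FibAux.shift_down, mul_assoc]
    rw [finsum_congr hcongr]
    exact (mul_finsum _ _).symm
  simp only []
  rw [FibAux.fibUp_nil, zero_mul, zero_add, hterm1, hterm2]
  exact add_comm _ _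
end

section
/- Let r be a positive integer and let (Γ_n, Γ'_n) be a partial qDGG of height n over a commutative ring R with distinguished element q: that is, weight functions m, m' on a vertex set V graded by h : V → {0,1,…,n}, supported on pairs (v,w) with h(w) = h(v)+1, such that for all u, v with h(u) = h(v) < n one has ∑_w m(u,w)·m'(v,w) = q·∑_x m'(x,u)·m(x,v) + r·δ_{u,v}. Extend the vertex set by adding, at height n+1, the set V_{n+1} = {v^1, …, v^r : v ∈ V, h(v) = n} ⊔ {w' : w ∈ V, h(w) = n-1}, and extend the weights by: in Γ_{n+1}, put m(v, v^j) = 1 for each v of height n and j = 1,…,r, and m(v, w') = q·m'(w,v) for each v of height n and w of height n-1 with m'(w,v) ≠ 0; in Γ'_{n+1}, put m'(v, v^j) = 1 and m'(v, w') = m(w,v). Then the extended pair (Γ_{n+1}, Γ'_{n+1}) satisfies ∑_w m(u,w)·m'(v,w) = q·∑_x m'(x,u)·m(x,v) + r·δ_{u,v} for all u, v with h(u) = h(v) < n+1; in particular this relation holds for all u, v of height exactly n. -/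
open scoped Classical

/-- The extended vertex set of the `q`-reflection construction: the old vertices `V`,
together with the new height-`(n+1)` vertices `v^1, …, v^r` for each `v ∈ V` with
`h(v) = n` and `w'` for each `w ∈ V` with `h(w) = n - 1` (i.e. `h(w) + 1 = n`). -/
abbrev ReflExt (V : Type*) (h : V → ℕ) (n r : ℕ) : Type _ :=
  V ⊕ ({v : V // h v = n} × Fin r ⊕ {w : V // h w + 1 = n})

/-- The extended height function: old vertices keep their height, new vertices get
height `n + 1`. -/
def reflHeight {V : Type*} (h : V → ℕ) (n r : ℕ) : ReflExt V h n r → ℕ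
  | Sum.inl v => h v
  | Sum.inr _ => n + 1

/-- The extended up-weights of `Γ_{n+1}`: the old weights `m`, together with
`m(v, v^j) = 1` for each `v` of height `n` and `j = 1, …, r`, and `m(v, w') = q·m'(w,v)`
for `v` of height `n` and `w` of height `n - 1`. -/
noncomputable def reflUp {R V : Type*} [CommRing R] (q : R) (h : V → ℕ) (n r : ℕ)
    (m m' : V → V → R) : ReflExt V h n r → ReflExt V h n r → R
  | Sum.inl v, Sum.inl w => m v w
  | Sum.inl v, Sum.inr (Sum.inl (u, _)) => if v = u.1 then 1 else 0
  | Sum.inl v, Sum.inr (Sum.inr w) => q * m' w.1 v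
  | Sum.inr _, _ => 0

/-- The extended down-weights of `Γ'_{n+1}`: the old weights `m'`, together with
`m'(v, v^j) = 1` and `m'(v, w') = m(w, v)`. -/
noncomputable def reflDown {R V : Type*} [CommRing R] (h : V → ℕ) (n r : ℕ)
    (m m' : V → V → R) : ReflExt V h n r → ReflExt V h n r → R
  | Sum.inl v, Sum.inl w => m' v w
  | Sum.inl v, Sum.inr (Sum.inl (u, _)) => if v = u.1 then 1 else 0
  | Sum.inl v, Sum.inr (Sum.inr w) => m w.1 v
  | Sum.inr _, _ => 0

theorem finsum_sum_split {α β M : Type*} [AddCommMonoid M] [Fintype β] (f : α ⊕ β → M)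
    (hf : (Function.support fun a => f (Sum.inl a)).Finite) :
    ∑ᶠ x, f x = (∑ᶠ a, f (Sum.inl a)) + ∑ b, f (Sum.inr b) := by
  classical
  have h1 : ∑ᶠ a, f (Sum.inl a) = ∑ a ∈ hf.toFinset, f (Sum.inl a) :=
    finsum_eq_sum_of_support_subset _ (by simp)
  have hsub : Function.support f ⊆
      ((hf.toFinset.image Sum.inl ∪ Finset.univ.image Sum.inr : Finset (α ⊕ β)) :
        Set (α ⊕ β)) := by
    rintro (a | b) hx
    · simp only [Finset.coe_union, Set.mem_union, Finset.coe_image, Set.mem_image]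
      exact Or.inl ⟨a, by simpa using hx, rfl⟩
    · simp
  rw [finsum_eq_sum_of_support_subset f hsub, Finset.sum_union
      (by simp [Finset.disjoint_left]), Finset.sum_image (by simp),
      Finset.sum_image (by simp [Sum.inr_injective]), h1]

/-- If `(Γ_n, Γ'_n)` is a partial qDGG of height `n` with differential
coefficient `r`, then the `q`-reflection extension `(Γ_{n+1}, Γ'_{n+1})` satisfies the
qDGG relation `∑_w m(u,w)·m'(v,w) = q·∑_x m'(x,u)·m(x,v) + r·δ_{u,v}` for all `u, v`
with `h(u) = h(v) < n + 1` (in particular for all `u, v` of height exactly `n`). -/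
theorem stmt_9 {R V : Type*} [CommRing R] (q : R) (r : ℕ) (hr : 0 < r)
    (n : ℕ) (h : V → ℕ) (m m' : V → V → R)
    -- the heights of `Γ_n` take values in `{0, 1, …, n}`
    (hht : ∀ v : V, h v ≤ n)
    -- finitely many vertices of each height
    (hfin : ∀ k : ℕ, {v : V | h v = k}.Finite)
    -- weights are supported on pairs `(v, w)` with `h(w) = h(v) + 1`
    (hm : ∀ v w : V, m v w ≠ 0 → h w = h v + 1)
    (hm' : ∀ v w : V, m' v w ≠ 0 → h w = h v + 1)
    -- the partial qDGG relation, for all vertices of height `< n`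
    (hdual : ∀ u v : V, h u = h v → h u < n →
      (∑ᶠ w : V, m u w * m' v w)
        = q * (∑ᶠ x : V, m' x u * m x v) + (r : R) * (if u = v then 1 else 0)) :
    ∀ u v : ReflExt V h n r, reflHeight h n r u = reflHeight h n r v →
      reflHeight h n r u < n + 1 →
      (∑ᶠ w : ReflExt V h n r, reflUp q h n r m m' u w * reflDown h n r m m' v w)
        = q * (∑ᶠ x : ReflExt V h n r, reflDown h n r m m' x u * reflUp q h n r m m' x v)
          + (r : R) * (if u = v then 1 else 0) := by
  classical
  haveI fin1 : Fintype {v : V // h v = n} := (hfin n).fintype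
  haveI fin2 : Fintype {w : V // h w + 1 = n} := by
    have hfw : {w : V | h w + 1 = n}.Finite :=
      (hfin (n - 1)).subset (fun w hw => by
        simp only [Set.mem_setOf_eq] at hw ⊢; omega)
    exact hfw.fintype
  rintro (a | c) (b | c) huv hlt
  · -- both old vertices
    simp only [reflHeight] at huv hlt
    -- support finiteness for the old parts
    have hsupL : (Function.support fun w : V =>
        reflUp q h n r m m' (Sum.inl a) (Sum.inl w)
          * reflDown h n r m m' (Sum.inl b) (Sum.inl w)).Finite := by
      refine (hfin (h a + 1)).subset fun w hw => ?_
      have hw' : m a w * m' b w ≠ 0 := hw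
      exact hm a w (left_ne_zero_of_mul hw')
    have hsupR : (Function.support fun x : V =>
        reflDown h n r m m' (Sum.inl x) (Sum.inl a)
          * reflUp q h n r m m' (Sum.inl x) (Sum.inl b)).Finite := by
      refine (hfin (h a - 1)).subset fun x hx => ?_
      have hx' : m' x a * m x b ≠ 0 := hx
      have := hm' x a (left_ne_zero_of_mul hx')
      simp only [Set.mem_setOf_eq]; omega
    have hRHS : (∑ᶠ x : ReflExt V h n r,
        reflDown h n r m m' x (Sum.inl a) * reflUp q h n r m m' x (Sum.inl b))
        = ∑ᶠ x : V, m' x a * m x b := by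
      rw [finsum_sum_split _ hsupR]
      have hz : ∀ c : ({v : V // h v = n} × Fin r ⊕ {w : V // h w + 1 = n}),
          reflDown h n r m m' (Sum.inr c) (Sum.inl a)
            * reflUp q h n r m m' (Sum.inr c) (Sum.inl b) = 0 := by
        rintro (c | c) <;> simp [reflDown, reflUp]
      simp only [hz, Finset.sum_const_zero, add_zero]
      rfl
    rw [finsum_sum_split _ hsupL, Fintype.sum_sum_type, hRHS]
    have hLold : (∑ᶠ w : V, reflUp q h n r m m' (Sum.inl a) (Sum.inl w)
        * reflDown h n r m m' (Sum.inl b) (Sum.inl w)) = ∑ᶠ w : V, m a w * m' b w := rfl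
    rw [hLold]
    rcases lt_or_eq_of_le (hht a) with hcase | hcase
    · -- height < n : new vertices contribute nothing
      have h1 : ∑ p : {v : V // h v = n} × Fin r,
          reflUp q h n r m m' (Sum.inl a) (Sum.inr (Sum.inl p))
            * reflDown h n r m m' (Sum.inl b) (Sum.inr (Sum.inl p)) = 0 := by
        refine Finset.sum_eq_zero fun p _ => ?_
        have : a ≠ p.1.1 := fun e => by
          have h2 := p.1.2; rw [← e] at h2; omega
        show (if a = p.1.1 then (1 : R) else 0) * (if b = p.1.1 then 1 else 0) = 0
        simp [this]
      have h2 : ∑ w : {w : V // h w + 1 = n},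
          reflUp q h n r m m' (Sum.inl a) (Sum.inr (Sum.inr w))
            * reflDown h n r m m' (Sum.inl b) (Sum.inr (Sum.inr w)) = 0 := by
        refine Finset.sum_eq_zero fun w _ => ?_
        have hz : m' w.1 a = 0 := by
          by_contra h0
          have := hm' w.1 a h0
          have := w.2
          omega
        show q * m' w.1 a * m w.1 b = 0
        simp [hz]
      rw [h1, h2, add_zero, add_zero, hdual a b huv hcase]
      congr 1
      simp [Sum.inl.injEq]
    · -- height = n
      have hb : h b = n := huv ▸ hcase
      have hold : (∑ᶠ w : V, m a w * m' b w) = 0 := by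
        refine finsum_eq_zero_of_forall_eq_zero fun w => ?_
        have hz : m a w = 0 := by
          by_contra h0
          have := hm a w h0
          have := hht w
          omega
        simp [hz]
      have h1 : ∑ p : {v : V // h v = n} × Fin r,
          reflUp q h n r m m' (Sum.inl a) (Sum.inr (Sum.inl p))
            * reflDown h n r m m' (Sum.inl b) (Sum.inr (Sum.inl p))
          = (r : R) * (if a = b then 1 else 0) := by
        have hterm : ∀ p : {v : V // h v = n} × Fin r,
            reflUp q h n r m m' (Sum.inl a) (Sum.inr (Sum.inl p))
              * reflDown h n r m m' (Sum.inl b) (Sum.inr (Sum.inl p))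
            = (if a = p.1.1 then (1 : R) else 0) * (if b = p.1.1 then 1 else 0) :=
          fun p => rfl
        simp only [hterm]
        rw [Fintype.sum_prod_type]
        have hin : ∀ s : {v : V // h v = n},
            (∑ _j : Fin r, ((if a = s.1 then (1 : R) else 0)
              * (if b = s.1 then 1 else 0)))
            = (r : R) * ((if a = s.1 then (1 : R) else 0)
              * (if b = s.1 then 1 else 0)) := fun s => by
          rw [Finset.sum_const, Finset.card_univ, Fintype.card_fin, nsmul_eq_mul]
        simp only [hin]
        have hs : ∑ s : {v : V // h v = n},
            (if a = s.1 then (1 : R) else 0) * (if b = s.1 then 1 else 0)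
            = if a = b then 1 else 0 := by
          rw [Finset.sum_eq_single_of_mem (⟨a, hcase⟩ : {v : V // h v = n})
            (Finset.mem_univ _)]
          · simp [eq_comm]
          · intro s _ hs
            have : a ≠ s.1 := fun e => hs (Subtype.ext e.symm)
            simp [this]
        rw [← Finset.mul_sum, hs]
      have h2 : ∑ w : {w : V // h w + 1 = n},
          reflUp q h n r m m' (Sum.inl a) (Sum.inr (Sum.inr w))
            * reflDown h n r m m' (Sum.inl b) (Sum.inr (Sum.inr w))
          = q * ∑ᶠ x : V, m' x a * m x b := by
      -- identify finsum with the subtype sum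
        have hss : Function.support (fun x : V => m' x a * m x b) ⊆
            ((Finset.univ.image (Subtype.val : {w : V // h w + 1 = n} → V) :
              Finset V) : Set V) := by
          intro x hx
          have h0 := hm' x a (left_ne_zero_of_mul hx)
          simp only [Finset.coe_image, Finset.coe_univ, Set.image_univ]
          exact ⟨⟨x, by omega⟩, rfl⟩
        rw [finsum_eq_sum_of_support_subset _ hss,
          Finset.sum_image (fun x _ y _ e => Subtype.ext e), Finset.mul_sum]
        refine Finset.sum_congr rfl fun w _ => ?_
        show q * m' w.1 a * m w.1 b = _
        ring
      rw [hold, h1, h2]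
      have : (if (Sum.inl a : ReflExt V h n r) = Sum.inl b then (1 : R) else 0)
          = if a = b then 1 else 0 := by simp [Sum.inl.injEq]
      rw [this]
      ring
  · -- v is a new vertex: impossible heights
    exfalso
    simp only [reflHeight] at huv
    have := hht a
    omega
  · exfalso
    simp only [reflHeight] at hlt
    omega
  · exfalso
    simp only [reflHeight] at hlt
    omega
end
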